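/- Let n ∈ ℕ and let v, u ∈ {0,1}ⁿ be two distinct finite binary sequences of length n that differ only in the last (n-th) digit. Let ⟨v⟩, ⟨u⟩ ∈ {0,1}^ℕ denote the infinite periodic sequences obtained by repeating v and u respectively. Then at least one of ⟨v⟩ and ⟨u⟩ has minimal period exactly n. -/
import Mathlib


/-- the infinite periodic sequence obtained by repeating a word `v` of length `n > 0` -/
def repeatWord {n : ℕ} (hn : 0 < n) (v : Fin n → Bool) : ℕ → Bool :=
  fun k => v ⟨k % n, Nat.mod_lt k hn⟩

theorem tail_choice (n : ℕ) (hn : 0 < n) (v u : Fin n → Bool)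
    (hne : v ≠ u)
    (hsame : ∀ j : Fin n, (j : ℕ) + 1 < n → v j = u j) :
    (∀ m : ℕ, 0 < m → m < n → ∃ k, repeatWord hn v (k + m) ≠ repeatWord hn v k) ∨
    (∀ m : ℕ, 0 < m → m < n → ∃ k, repeatWord hn u (k + m) ≠ repeatWord hn u k) := by
  by_contra hcon
  push_neg at hcon
  obtain ⟨⟨m, hm0, hmn, hm⟩, ⟨m', hm'0, hm'n, hm'⟩⟩ := hcon
  set f := repeatWord hn v with hf
  set g := repeatWord hn u with hg
  have hmodeq : ∀ (w : Fin n → Bool) (a b : ℕ), a % n = b % n →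
      repeatWord hn w a = repeatWord hn w b := by
    intro w a b h
    simp only [repeatWord]
    congr 1
    exact Fin.ext h
  have hagree : ∀ k, k % n ≠ n - 1 → f k = g k := by
    intro k hk
    have hlt : k % n < n := Nat.mod_lt k hn
    refine hsame ⟨k % n, hlt⟩ ?_
    show k % n + 1 < n
    omega
  have hmod1 : (n - 1 + m) % n = m - 1 := by
    have h : n - 1 + m = (m - 1) + n := by omega
    rw [h, Nat.add_mod_right, Nat.mod_eq_of_lt (by omega)]
  have hmod2 : (n - 1 + m') % n = m' - 1 := by
    have h : n - 1 + m' = (m' - 1) + n := by omega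
    rw [h, Nat.add_mod_right, Nat.mod_eq_of_lt (by omega)]
  have key : f (n - 1) = g (n - 1) := by
    have c1 : f (n - 1) = f (n - 1 + m) := (hm (n - 1)).symm
    have c2 : f (n - 1 + m) = g (n - 1 + m) := hagree _ (by omega)
    have c6 : g (n - 1 + m') = g (n - 1) := hm' (n - 1)
    have c5 : f (n - 1 + m') = g (n - 1 + m') := hagree _ (by omega)
    by_cases hs : m + m' = n
    · -- f (n-1+m') = f (n-1+m'+m) = f (n-1+n) = f (n-1)
      have e1 : f (n - 1 + m' + m) = f (n - 1 + m') := hm (n - 1 + m')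
      have e2 : f (n - 1 + m' + m) = f (n - 1) := by
        apply hmodeq
        have h : n - 1 + m' + m = (n - 1) + n := by omega
        rw [h, Nat.add_mod_right]
      rw [← e2, e1, c5, c6]
    · have c3 : g (n - 1 + m) = g (n - 1 + m + m') := (hm' (n - 1 + m)).symm
      have hmod3 : (n - 1 + m + m') % n ≠ n - 1 := by
        rcases lt_or_gt_of_ne hs with h | h
        · have he : n - 1 + m + m' = (m + m' - 1) + n := by omega
          rw [he, Nat.add_mod_right, Nat.mod_eq_of_lt (by omega)]
          omega
        · have he : n - 1 + m + m' = (m + m' - 1 - n) + n + n := by omega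
          rw [he, Nat.add_mod_right, Nat.add_mod_right,
            Nat.mod_eq_of_lt (by omega)]
          omega
      have c4 : f (n - 1 + m + m') = g (n - 1 + m + m') := hagree _ hmod3
      have c4' : f (n - 1 + m' + m) = f (n - 1 + m') := hm (n - 1 + m')
      have heq : n - 1 + m + m' = n - 1 + m' + m := by omega
      rw [c1, c2, c3, ← c4, heq, c4', c5, c6]
  -- conclude v = u
  apply hne
  funext j
  by_cases hj : (j : ℕ) + 1 < n
  · exact hsame j hj
  · have hj' : (j : ℕ) = n - 1 := by have := j.isLt; omega
    have hjv : j = ⟨(n - 1) % n, Nat.mod_lt (n - 1) hn⟩ := by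
      apply Fin.ext
      simp [Nat.mod_eq_of_lt (by omega : n - 1 < n), hj']
    have h1 : v j = f (n - 1) := by rw [hjv]; rfl
    have h2 : u j = g (n - 1) := by rw [hjv]; rfl
    rw [h1, h2, key]
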